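/- Let a₀, a₁, a₂, … be complex numbers and define c₀ = 1 and c_k = Σ_{j=0}^{k−1} c_j a_{k−1−j} for k ≥ 1. For r ≥ 1 let G_r be the (2r+1)×(2r+1) matrix with block row and column partition (r, 1, r) given by G_r = [[I_r − T_r T_r*, 0, Q_r], [0, 1, 0], [Q_r*, 0, I_r − T̃_r T̃_r*]], and let C_r be the (2r+1)×(2r+1) matrix C_r = D · P, where D is the block-diagonal matrix with diagonal blocks I_r (size r×r) and B_r (size (r+1)×(r+1)), and P is the (2r+1)×(2r+1) matrix with row partition (r+1, r) and column partition (r, r+1) whose top-left block is 0, top-right block is B_r*·J_{r+1}, bottom-left block is I_r, and bottom-right block is 0. Then M_{2r} = C_r · G_r · C_r* for every r ≥ 1. -/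

import Mathlib

open scoped Matrix ComplexConjugate

/-- The number of negative eigenvalues (with multiplicity) of a Hermitian complex
matrix; junk value `0` if the matrix is not Hermitian. -/
noncomputable def negEig {n : Type*} [Fintype n] [DecidableEq n]
    (A : Matrix n n ℂ) : ℕ :=
  if h : A.IsHermitian then Nat.card {i // h.eigenvalues i < 0} else 0

/-- The number of positive eigenvalues (with multiplicity) of a Hermitian complex
matrix; junk value `0` if the matrix is not Hermitian. -/
noncomputable def posEig {n : Type*} [Fintype n] [DecidableEq n]
    (A : Matrix n n ℂ) : ℕ :=
  if h : A.IsHermitian then Nat.card {i // 0 < h.eigenvalues i} else 0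

/-- The Schur kernel `K_S(w,z) = (1 - S(z) conj(S(w)))/(1 - z conj(w))`. -/
noncomputable def schurKer (S : ℂ → ℂ) (w z : ℂ) : ℂ :=
  (1 - S z * conj (S w)) / (1 - z * conj w)

/-- A Hermitian kernel `K` has exactly `κ` negative squares on `Ω`. -/
def HasNegSquares (Ω : Set ℂ) (K : ℂ → ℂ → ℂ) (κ : ℕ) : Prop :=
  (∀ (m : ℕ) (z : Fin m → ℂ), (∀ i, z i ∈ Ω) →
      negEig (Matrix.of fun i j => K (z j) (z i)) ≤ κ) ∧
  (∃ (m : ℕ) (z : Fin m → ℂ), (∀ i, z i ∈ Ω) ∧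
      negEig (Matrix.of fun i j => K (z j) (z i)) = κ)

/-- The `r×r` lower triangular Toeplitz matrix built from `a₀, a₁, …`. -/
def Tmat (a : ℕ → ℂ) (r : ℕ) : Matrix (Fin r) (Fin r) ℂ :=
  Matrix.of fun i j => if (j : ℕ) ≤ i then a ((i : ℕ) - j) else 0

/-- The `r×r` lower triangular Toeplitz matrix built from `conj a₀, conj a₁, …`. -/
def Ttil (a : ℕ → ℂ) (r : ℕ) : Matrix (Fin r) (Fin r) ℂ :=
  Matrix.of fun i j => if (j : ℕ) ≤ i then conj (a ((i : ℕ) - j)) else 0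

/-- The `r×r` Hankel matrix with entries `a_{i+j+1}`. -/
def Qmat (a : ℕ → ℂ) (r : ℕ) : Matrix (Fin r) (Fin r) ℂ :=
  Matrix.of fun i j => a ((i : ℕ) + j + 1)

/-- The `m×m` lower triangular Toeplitz matrix built from `c₀, c₁, …`. -/
def Bmat (c : ℕ → ℂ) (m : ℕ) : Matrix (Fin m) (Fin m) ℂ :=
  Matrix.of fun i j => if (j : ℕ) ≤ i then c ((i : ℕ) - j) else 0

/-- The `m×m` lower triangular Toeplitz matrix built from `conj c₀, conj c₁, …`. -/
def Btil (c : ℕ → ℂ) (m : ℕ) : Matrix (Fin m) (Fin m) ℂ :=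
  Matrix.of fun i j => if (j : ℕ) ≤ i then conj (c ((i : ℕ) - j)) else 0

/-- The `m×m` Hermitian Toeplitz matrix built from `c₀, c₁, …`
(`M_r` of the paper has size `r+1`, i.e. it is `Mmat c (r+1)`). -/
def Mmat (c : ℕ → ℂ) (m : ℕ) : Matrix (Fin m) (Fin m) ℂ :=
  Matrix.of fun i j =>
    if (j : ℕ) ≤ i then c ((i : ℕ) - j) else conj (c ((j : ℕ) - i))

/-- The `m×m` flip matrix, with ones on the antidiagonal. -/
def Jmat (m : ℕ) : Matrix (Fin m) (Fin m) ℂ :=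
  Matrix.of fun i j => if (i : ℕ) + j + 1 = m then 1 else 0

/-- Identification of `Fin m` with `Fin p ⊕ Fin q` when `m = p + q`. -/
def splitAt {p q m : ℕ} (h : m = p + q) : Fin m → Fin p ⊕ Fin q :=
  fun i =>
    if h' : (i : ℕ) < p then Sum.inl ⟨i, h'⟩
    else Sum.inr ⟨(i : ℕ) - p, by have := i.isLt; omega⟩

/-- The `m×m` block diagonal matrix `diag(A, D)` with `A` of size `p` and `D` of
size `q`, where `m = p + q`. -/
def dblock {p q m : ℕ} (h : m = p + q)
    (A : Matrix (Fin p) (Fin p) ℂ) (D : Matrix (Fin q) (Fin q) ℂ) :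
    Matrix (Fin m) (Fin m) ℂ :=
  (Matrix.fromBlocks A 0 0 D).submatrix (splitAt h) (splitAt h)

/-- The sequence `c` belongs to the class `P_ν`: `ν(M_r) = ν` for all
sufficiently large `r`. -/
def memP (c : ℕ → ℂ) (ν : ℕ) : Prop :=
  ∃ N, ∀ r ≥ N, negEig (Mmat c (r + 1)) = ν

/-- The sequence `c` belongs to the class `P_{ν,π}`: `ν(M_r) = ν` and
`π(M_r) = π` for all sufficiently large `r`. -/
def memPP (c : ℕ → ℂ) (ν π : ℕ) : Prop :=
  ∃ N, ∀ r ≥ N, negEig (Mmat c (r + 1)) = ν ∧ posEig (Mmat c (r + 1)) = π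

/-- The `(2r+1)×(2r+1)` matrix `G_r` with block row and column partition
`(r, 1, r)` given by
`[[I_r − T_r T_r*, 0, Q_r], [0, 1, 0], [Q_r*, 0, I_r − T̃_r T̃_r*]]`,
realized via the partition `(r, r+1)` with the lower right `(r+1)×(r+1)` corner
itself partitioned as `(1, r)`. -/
noncomputable def Gbig (a : ℕ → ℂ) (r : ℕ) : Matrix (Fin (2 * r + 1)) (Fin (2 * r + 1)) ℂ :=
  (Matrix.fromBlocks
      (1 - Tmat a r * (Tmat a r)ᴴ)
      (Matrix.of fun (i : Fin r) (j : Fin (r + 1)) =>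
        if h : 1 ≤ (j : ℕ) then
          Qmat a r i ⟨(j : ℕ) - 1, by have := j.isLt; omega⟩
        else 0)
      (Matrix.of fun (i : Fin (r + 1)) (j : Fin r) =>
        if h : 1 ≤ (i : ℕ) then
          conj (Qmat a r j ⟨(i : ℕ) - 1, by have := i.isLt; omega⟩)
        else 0)
      (dblock (by omega) (1 : Matrix (Fin 1) (Fin 1) ℂ)
        (1 - Ttil a r * (Ttil a r)ᴴ))).submatrix
    (splitAt (show 2 * r + 1 = r + (r + 1) by omega))
    (splitAt (show 2 * r + 1 = r + (r + 1) by omega))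

/-- The `(2r+1)×(2r+1)` matrix `C_r = D · P` where `D = diag(I_r, B_r)` (with
row and column partition `(r, r+1)`) and `P` is the matrix with row partition
`(r+1, r)` and column partition `(r, r+1)` with blocks
`[[0, B_r* J_{r+1}], [I_r, 0]]`. -/
noncomputable def Cbig (c : ℕ → ℂ) (r : ℕ) : Matrix (Fin (2 * r + 1)) (Fin (2 * r + 1)) ℂ :=
  ((Matrix.fromBlocks (1 : Matrix (Fin r) (Fin r) ℂ) 0 0
        (Bmat c (r + 1))).submatrix
      (splitAt (show 2 * r + 1 = r + (r + 1) by omega))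
      (splitAt (show 2 * r + 1 = r + (r + 1) by omega))) *
  ((Matrix.fromBlocks (0 : Matrix (Fin (r + 1)) (Fin r) ℂ)
        ((Bmat c (r + 1))ᴴ * Jmat (r + 1))
        (1 : Matrix (Fin r) (Fin r) ℂ) 0).submatrix
      (splitAt (show 2 * r + 1 = (r + 1) + r by omega))
      (splitAt (show 2 * r + 1 = r + (r + 1) by omega)))

section Statement4Aux

open Finset

private lemma sum_range_cut' {M : Type*} [AddCommMonoid M] {n N : ℕ} (h : n ≤ N) (g : ℕ → M)
    (hg : ∀ x, n ≤ x → x < N → g x = 0) :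
    ∑ x ∈ range N, g x = ∑ x ∈ range n, g x :=
  (Finset.sum_subset (Finset.range_subset_range.2 h) fun x hx hnx =>
    hg x (le_of_not_gt (by simpa using hnx)) (by simpa using hx)).symm

private lemma sum_ite_range {M : Type*} [AddCommMonoid M] {n N : ℕ} (h : n ≤ N) (f : ℕ → M)
    (P : ℕ → Prop) [DecidablePred P] (hP : ∀ x, x < N → (P x ↔ x < n)) :
    ∑ x ∈ range N, (if P x then f x else 0) = ∑ x ∈ range n, f x := by
  rw [sum_range_cut' h _ (fun x hx hxN => if_neg (fun hp => absurd ((hP x hxN).1 hp) (by omega)))]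
  exact Finset.sum_congr rfl fun x hx =>
    if_pos ((hP x (by have := mem_range.1 hx; omega)).2 (mem_range.1 hx))

private lemma sum_split (r : ℕ) (f : ℕ → ℂ) :
    ∑ x ∈ range (2 * r + 1), f x
      = (∑ x ∈ range r, f x) + f r + ∑ x ∈ range r, f (r + 1 + x) := by
  rw [show 2 * r + 1 = r + (r + 1) from by omega, Finset.sum_range_add,
    Finset.sum_range_succ' (fun x => f (r + x)) r]
  have h2 : ∀ x, f (r + (x + 1)) = f (r + 1 + x) := fun x => by congr 1; omega
  simp only [h2, Nat.add_zero]
  ring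

private lemma hcR (a c : ℕ → ℂ)
    (hc : ∀ k : ℕ, c (k + 1) = ∑ j ∈ range (k + 1), c j * a (k - j)) (n : ℕ) :
    ∑ t ∈ range (n + 1), c (n - t) * a t = c (n + 1) := by
  rw [hc n]
  conv_lhs => rw [← Finset.sum_range_reflect]
  refine Finset.sum_congr rfl fun t ht => ?_
  have ht' := mem_range.1 ht
  rw [show n - (n + 1 - 1 - t) = t from by omega, show n + 1 - 1 - t = n - t from by omega]

private lemma conv_sum (a c : ℕ → ℂ)
    (hc : ∀ k : ℕ, c (k + 1) = ∑ j ∈ range (k + 1), c j * a (k - j))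
    {k i : ℕ} (h : k < i) :
    ∑ m ∈ range i, (if k ≤ m then c (i - 1 - m) * a (m - k) else 0) = c (i - k) := by
  rw [← Finset.sum_filter]
  have hfil : (range i).filter (fun m => k ≤ m) = Finset.Ico k i := by
    ext x; simp only [Finset.mem_filter, Finset.mem_range, Finset.mem_Ico]
    omega
  rw [hfil, Finset.sum_Ico_eq_sum_range]
  obtain ⟨d, hd⟩ : ∃ d, i - k = d + 1 := ⟨i - k - 1, by omega⟩
  rw [hd, ← hcR a c hc d]
  refine Finset.sum_congr rfl fun t ht => ?_
  have ht' := mem_range.1 ht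
  rw [show i - 1 - (k + t) = d - t from by omega, show k + t - k = t from by omega]

private lemma convB (a c : ℕ → ℂ)
    (hc : ∀ k : ℕ, c (k + 1) = ∑ j ∈ range (k + 1), c j * a (k - j)) (i k : ℕ) :
    ∑ m ∈ range i, c (i - 1 - m) * a (m + k + 1)
      = c (i + k + 1) - ∑ u ∈ range (k + 1), c (i + u) * a (k - u) := by
  have h0 := hc (i + k)
  rw [show i + k + 1 = i + (k + 1) from by omega, Finset.sum_range_add] at h0
  have h1 : ∑ j ∈ range i, c j * a (i + k - j) = ∑ m ∈ range i, c (i - 1 - m) * a (m + k + 1) := by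
    conv_lhs => rw [← Finset.sum_range_reflect]
    refine Finset.sum_congr rfl fun m hm => ?_
    have hm' := mem_range.1 hm
    rw [show i + k - (i - 1 - m) = m + k + 1 from by omega]
  have h2 : ∑ u ∈ range (k + 1), c (i + u) * a (i + k - (i + u))
      = ∑ u ∈ range (k + 1), c (i + u) * a (k - u) := by
    refine Finset.sum_congr rfl fun u hu => ?_
    congr 2; omega
  rw [h1, h2] at h0
  rw [show i + k + 1 = i + (k + 1) from by omega, h0]
  ring

private lemma tri (f : ℕ → ℕ → ℂ) (t : ℕ) :
    ∑ k ∈ range t, ∑ u ∈ range (k + 1), f u (k - u)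
      = ∑ u ∈ range t, ∑ w ∈ range (t - u), f u w := by
  induction t with
  | zero => simp
  | succ t ih =>
    rw [Finset.sum_range_succ (fun k => ∑ u ∈ range (k + 1), f u (k - u)) t, ih,
      Finset.sum_range_succ (fun u => ∑ w ∈ range (t + 1 - u), f u w) t,
      show t + 1 - t = 1 from by omega, Finset.sum_range_one,
      Finset.sum_range_succ (fun u => f u (t - u)) t, Nat.sub_self]
    have h3 : ∀ u ∈ range t, ∑ w ∈ range (t + 1 - u), f u w
        = ∑ w ∈ range (t - u), f u w + f u (t - u) := by
      intro u hu
      have hu' := mem_range.1 hu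
      rw [show t + 1 - u = (t - u) + 1 from by omega, Finset.sum_range_succ]
    rw [Finset.sum_congr rfl h3, Finset.sum_add_distrib]
    ring

private lemma KeyB (a c : ℕ → ℂ) (hc0 : c 0 = 1)
    (hc : ∀ k : ℕ, c (k + 1) = ∑ j ∈ range (k + 1), c j * a (k - j)) (s t : ℕ) :
    c s * c t + ∑ j ∈ range s, ∑ k ∈ range t, c (s - 1 - j) * a (j + k + 1) * c (t - 1 - k)
      = c (s + t) := by
  rw [Finset.sum_comm]
  have h1 : ∀ k ∈ range t, ∑ j ∈ range s, c (s - 1 - j) * a (j + k + 1) * c (t - 1 - k)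
      = (c (s + k + 1) - ∑ u ∈ range (k + 1), c (s + u) * a (k - u)) * c (t - 1 - k) :=
    fun k _ => by rw [← Finset.sum_mul, convB a c hc s k]
  rw [Finset.sum_congr rfl h1]
  simp only [sub_mul]
  rw [Finset.sum_sub_distrib]
  have hT2 : ∑ k ∈ range t, (∑ u ∈ range (k + 1), c (s + u) * a (k - u)) * c (t - 1 - k)
      = ∑ u ∈ range t, ∑ w ∈ range (t - u), c (s + u) * a w * c (t - 1 - (u + w)) := by
    rw [← tri (fun u w => c (s + u) * a w * c (t - 1 - (u + w))) t]
    refine Finset.sum_congr rfl fun k hk => ?_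
    rw [Finset.sum_mul]
    refine Finset.sum_congr rfl fun u hu => ?_
    have hu' := mem_range.1 hu
    rw [show u + (k - u) = k from by omega]
  rw [hT2]
  have h3 : ∀ u ∈ range t, ∑ w ∈ range (t - u), c (s + u) * a w * c (t - 1 - (u + w))
      = c (s + u) * c (t - u) := by
    intro u hu
    have hu' := mem_range.1 hu
    obtain ⟨d, hd⟩ : ∃ d, t - u = d + 1 := ⟨t - u - 1, by omega⟩
    rw [hd, ← hcR a c hc d, Finset.mul_sum]
    refine Finset.sum_congr rfl fun w hw => ?_
    have hw' := mem_range.1 hw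
    rw [show t - 1 - (u + w) = d - w from by omega]
    ring
  rw [Finset.sum_congr rfl h3]
  have e1 : ∑ u ∈ range (t + 1), c (s + u) * c (t - u)
      = (∑ k ∈ range t, c (s + (k + 1)) * c (t - (k + 1))) + c (s + 0) * c (t - 0) :=
    Finset.sum_range_succ' _ _
  have e2 : ∑ u ∈ range (t + 1), c (s + u) * c (t - u)
      = (∑ u ∈ range t, c (s + u) * c (t - u)) + c (s + t) * c (t - t) :=
    Finset.sum_range_succ _ _
  simp only [Nat.add_zero, Nat.sub_zero, Nat.sub_self] at e1 e2
  rw [hc0, mul_one] at e2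
  have hfix : ∀ k ∈ range t, c (s + k + 1) * c (t - 1 - k) = c (s + (k + 1)) * c (t - (k + 1)) :=
    fun k hk => by rw [show s + k + 1 = s + (k + 1) from by omega,
      show t - 1 - k = t - (k + 1) from by omega]
  rw [Finset.sum_congr rfl hfix]
  linear_combination e2 - e1

private lemma KeyAD (a c : ℕ → ℂ) (hc0 : c 0 = 1)
    (hc : ∀ k : ℕ, c (k + 1) = ∑ j ∈ range (k + 1), c j * a (k - j)) (s t : ℕ) :
    c s * conj (c t) + ∑ j ∈ range s, ∑ k ∈ range t,
        c (s - 1 - j) * conj (c (t - 1 - k)) *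
          ((if j = k then (1 : ℂ) else 0)
            - ∑ l ∈ range (min j k + 1), a (j - l) * conj (a (k - l)))
      = if t ≤ s then c (s - t) else conj (c (t - s)) := by
  have hsplit : ∀ j ∈ range s, ∀ k ∈ range t,
      c (s - 1 - j) * conj (c (t - 1 - k)) *
          ((if j = k then (1 : ℂ) else 0)
            - ∑ l ∈ range (min j k + 1), a (j - l) * conj (a (k - l)))
      = (if j = k then c (s - 1 - j) * conj (c (t - 1 - k)) else 0)
        - ∑ l ∈ range s, (if l ≤ j then c (s - 1 - j) * a (j - l) else 0)
            * (if l ≤ k then conj (c (t - 1 - k)) * conj (a (k - l)) else 0) := by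
    intro j hj k hk
    rw [mul_sub]
    congr 1
    · rw [mul_ite, mul_one, mul_zero]
    · rw [Finset.mul_sum]
      have hprod : ∀ l, (if l ≤ j then c (s - 1 - j) * a (j - l) else 0)
          * (if l ≤ k then conj (c (t - 1 - k)) * conj (a (k - l)) else 0)
          = if l ≤ j ∧ l ≤ k then
              c (s - 1 - j) * conj (c (t - 1 - k)) * (a (j - l) * conj (a (k - l))) else 0 := by
        intro l
        rw [ite_zero_mul_ite_zero]
        exact if_congr Iff.rfl (by ring) rfl
      simp only [hprod]
      exact (sum_ite_range (show min j k + 1 ≤ s from by have := mem_range.1 hj; omega) _ _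
        (fun x hx => by omega)).symm
  rw [Finset.sum_congr rfl (fun j hj => Finset.sum_congr rfl (hsplit j hj))]
  simp only [Finset.sum_sub_distrib]
  have hD : ∑ j ∈ range s, ∑ k ∈ range t,
      (if j = k then c (s - 1 - j) * conj (c (t - 1 - k)) else 0)
      = ∑ j ∈ range (min s t), c (s - 1 - j) * conj (c (t - 1 - j)) := by
    have h1 : ∀ j ∈ range s, ∑ k ∈ range t,
        (if j = k then c (s - 1 - j) * conj (c (t - 1 - k)) else 0)
        = if j < t then c (s - 1 - j) * conj (c (t - 1 - j)) else 0 := by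
      intro j _
      rw [Finset.sum_ite_eq (range t) j (fun k => c (s - 1 - j) * conj (c (t - 1 - k)))]
      simp [Finset.mem_range]
    rw [Finset.sum_congr rfl h1]
    exact sum_ite_range (by omega) _ _ (fun x hx => by omega)
  have hT : ∑ j ∈ range s, ∑ k ∈ range t,
      ∑ l ∈ range s, (if l ≤ j then c (s - 1 - j) * a (j - l) else 0)
          * (if l ≤ k then conj (c (t - 1 - k)) * conj (a (k - l)) else 0)
      = ∑ l ∈ range (min s t), c (s - l) * conj (c (t - l)) := by
    rw [Finset.sum_congr rfl (fun j (_ : j ∈ range s) => Finset.sum_comm (s := range t)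
      (t := range s))]
    rw [Finset.sum_comm]
    have h2 : ∀ l ∈ range s,
        ∑ j ∈ range s, ∑ k ∈ range t, (if l ≤ j then c (s - 1 - j) * a (j - l) else 0)
          * (if l ≤ k then conj (c (t - 1 - k)) * conj (a (k - l)) else 0)
        = c (s - l) * (if l < t then conj (c (t - l)) else 0) := by
      intro l hl
      have hls := mem_range.1 hl
      rw [← Finset.sum_mul_sum]
      congr 1
      · exact conv_sum a c hc hls
      · by_cases hlt : l < t
        · rw [if_pos hlt]
          have h3 : ∀ k, (if l ≤ k then conj (c (t - 1 - k)) * conj (a (k - l)) else 0)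
              = conj (if l ≤ k then c (t - 1 - k) * a (k - l) else 0) := fun k => by
            rw [apply_ite (starRingEnd ℂ), map_mul, map_zero]
          simp only [h3]
          rw [← map_sum, conv_sum a c hc hlt]
        · rw [if_neg hlt]
          exact Finset.sum_eq_zero fun k hk => if_neg (by have := mem_range.1 hk; omega)
    rw [Finset.sum_congr rfl h2]
    simp only [mul_ite, mul_zero]
    exact sum_ite_range (by omega) _ _ (fun x hx => by omega)
  rw [hD, hT]
  have e1 : ∑ l ∈ range (min s t + 1), c (s - l) * conj (c (t - l))
      = (∑ j ∈ range (min s t), c (s - (j + 1)) * conj (c (t - (j + 1))))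
        + c (s - 0) * conj (c (t - 0)) := Finset.sum_range_succ' _ _
  have e2 : ∑ l ∈ range (min s t + 1), c (s - l) * conj (c (t - l))
      = (∑ l ∈ range (min s t), c (s - l) * conj (c (t - l)))
        + c (s - min s t) * conj (c (t - min s t)) := Finset.sum_range_succ _ _
  simp only [Nat.sub_zero] at e1
  have hfix : ∀ j ∈ range (min s t), c (s - 1 - j) * conj (c (t - 1 - j))
      = c (s - (j + 1)) * conj (c (t - (j + 1))) := fun j hj => by
    rw [show s - 1 - j = s - (j + 1) from by omega, show t - 1 - j = t - (j + 1) from by omega]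
  rw [Finset.sum_congr rfl hfix]
  have hRHS : (if t ≤ s then c (s - t) else conj (c (t - s)))
      = c (s - min s t) * conj (c (t - min s t)) := by
    rcases le_or_gt t s with h | h
    · rw [if_pos h, Nat.min_eq_right h, Nat.sub_self, hc0, map_one, mul_one]
    · rw [if_neg (by omega), Nat.min_eq_left (by omega), Nat.sub_self, hc0, one_mul]
  rw [hRHS]
  linear_combination e2 - e1

noncomputable def cfE (c : ℕ → ℂ) (r p q : ℕ) : ℂ :=
  if p < r then
    (if r ≤ q ∧ p + (q - r) ≤ r then conj (c (r - (q - r) - p)) else 0)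
  else if q < r then (if q + r + 1 ≤ p then c (p - (q + r + 1)) else 0)
  else if q = r then c (p - r)
  else 0

noncomputable def gfE (a : ℕ → ℂ) (r α β : ℕ) : ℂ :=
  if α < r then
    (if β < r then
      (if α = β then 1 else 0) - ∑ l ∈ range (min α β + 1), a (α - l) * conj (a (β - l))
    else if β = r then 0
    else a (α + (β - r)))
  else if α = r then (if β = r then 1 else 0)
  else if β < r then conj (a (β + (α - r)))
  else if β = r then 0
  else (if α = β then 1 else 0)
      - ∑ l ∈ range (min (α - r - 1) (β - r - 1) + 1),
          conj (a (α - r - 1 - l)) * a (β - r - 1 - l)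

noncomputable def dfE (c : ℕ → ℂ) (r p k : ℕ) : ℂ :=
  if p < r then (if p = k then 1 else 0)
  else if r ≤ k ∧ k ≤ p then c (p - k) else 0

noncomputable def pfE (c : ℕ → ℂ) (r k q : ℕ) : ℂ :=
  if k < r + 1 then
    (if r ≤ q ∧ k + (q - r) ≤ r then conj (c (r - (q - r) - k)) else 0)
  else if q + r + 1 = k then 1 else 0

private lemma TT_apply (a : ℕ → ℂ) (r : ℕ) (j k : Fin r) :
    (Tmat a r * (Tmat a r)ᴴ) j k
      = ∑ l ∈ range (min (j : ℕ) (k : ℕ) + 1), a ((j : ℕ) - l) * conj (a ((k : ℕ) - l)) := by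
  rw [Matrix.mul_apply]
  have h1 : ∀ l : Fin r, Tmat a r j l * (Tmat a r)ᴴ l k
      = (fun x => if x ≤ (j : ℕ) ∧ x ≤ (k : ℕ) then a ((j : ℕ) - x) * conj (a ((k : ℕ) - x))
          else 0) (l : ℕ) := by
    intro l
    simp only [Tmat, Matrix.conjTranspose_apply, Matrix.of_apply]
    by_cases h1 : (l : ℕ) ≤ (j : ℕ) <;> by_cases h2 : (l : ℕ) ≤ (k : ℕ) <;>
      simp [h1, h2]
  simp only [h1]
  rw [Fin.sum_univ_eq_sum_range (fun x => if x ≤ (j : ℕ) ∧ x ≤ (k : ℕ) then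
    a ((j : ℕ) - x) * conj (a ((k : ℕ) - x)) else 0) r]
  exact sum_ite_range (show min (j : ℕ) (k : ℕ) + 1 ≤ r from by have := j.isLt; omega) _ _
    (fun x hx => by omega)

private lemma TtT_apply (a : ℕ → ℂ) (r : ℕ) (j k : Fin r) :
    (Ttil a r * (Ttil a r)ᴴ) j k
      = ∑ l ∈ range (min (j : ℕ) (k : ℕ) + 1), conj (a ((j : ℕ) - l)) * a ((k : ℕ) - l) := by
  rw [Matrix.mul_apply]
  have h1 : ∀ l : Fin r, Ttil a r j l * (Ttil a r)ᴴ l k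
      = (fun x => if x ≤ (j : ℕ) ∧ x ≤ (k : ℕ) then conj (a ((j : ℕ) - x)) * a ((k : ℕ) - x)
          else 0) (l : ℕ) := by
    intro l
    simp only [Ttil, Matrix.conjTranspose_apply, Matrix.of_apply]
    by_cases h1 : (l : ℕ) ≤ (j : ℕ) <;> by_cases h2 : (l : ℕ) ≤ (k : ℕ) <;>
      simp [h1, h2]
  simp only [h1]
  rw [Fin.sum_univ_eq_sum_range (fun x => if x ≤ (j : ℕ) ∧ x ≤ (k : ℕ) then
    conj (a ((j : ℕ) - x)) * a ((k : ℕ) - x) else 0) r]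
  exact sum_ite_range (show min (j : ℕ) (k : ℕ) + 1 ≤ r from by have := j.isLt; omega) _ _
    (fun x hx => by omega)

private lemma BJ_apply (c : ℕ → ℂ) (r : ℕ) (x y : Fin (r + 1)) :
    ((Bmat c (r + 1))ᴴ * Jmat (r + 1)) x y
      = if (x : ℕ) + (y : ℕ) ≤ r then conj (c (r - (y : ℕ) - (x : ℕ))) else 0 := by
  rw [Matrix.mul_apply]
  rw [Finset.sum_eq_single (⟨r - (y : ℕ), by omega⟩ : Fin (r + 1))]
  · rw [Matrix.conjTranspose_apply]
    simp only [Bmat, Jmat, Matrix.of_apply]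
    rw [if_pos (show r - (y : ℕ) + (y : ℕ) + 1 = r + 1 from by have := y.isLt; omega), mul_one]
    rw [← starRingEnd_apply, apply_ite (starRingEnd ℂ), map_zero]
    by_cases h2 : (x : ℕ) + (y : ℕ) ≤ r
    · rw [if_pos (show (x : ℕ) ≤ r - (y : ℕ) from by omega), if_pos h2]
    · rw [if_neg (show ¬ (x : ℕ) ≤ r - (y : ℕ) from by have := y.isLt; omega), if_neg h2]
  · intro b _ hb
    have hb' : (b : ℕ) ≠ r - (y : ℕ) := fun hh => hb (Fin.ext hh)
    simp only [Jmat, Matrix.of_apply]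
    rw [if_neg (show ¬ ((b : ℕ) + (y : ℕ) + 1 = r + 1) from by have := y.isLt; omega), mul_zero]
  · intro h
    exact absurd (Finset.mem_univ _) h
section Branch
variable (a c : ℕ → ℂ) {r p q β : ℕ}

private lemma cf_left_low (hp : p < r) (hβ : β < r) : cfE c r p β = 0 := by
  unfold cfE; rw [if_pos hp, if_neg (by omega)]

private lemma cf_left_mid (hp : p < r) : cfE c r p r = conj (c (r - p)) := by
  unfold cfE
  rw [if_pos hp, if_pos (show r ≤ r ∧ p + (r - r) ≤ r from by omega),
    show r - (r - r) - p = r - p from by omega]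

private lemma cf_left_high (hp : p < r) (m : ℕ) :
    cfE c r p (r + 1 + m) = if p + m + 1 ≤ r then conj (c (r - p - 1 - m)) else 0 := by
  unfold cfE
  rw [if_pos hp]
  by_cases h2 : p + m + 1 ≤ r
  · rw [if_pos (show r ≤ r + 1 + m ∧ p + (r + 1 + m - r) ≤ r from by omega), if_pos h2,
      show r - (r + 1 + m - r) - p = r - p - 1 - m from by omega]
  · rw [if_neg (show ¬ (r ≤ r + 1 + m ∧ p + (r + 1 + m - r) ≤ r) from by omega), if_neg h2]

private lemma cf_right_low (hp : r ≤ p) (hβ : β < r) :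
    cfE c r p β = if β + r + 1 ≤ p then c (p - (β + r + 1)) else 0 := by
  unfold cfE; rw [if_neg (by omega), if_pos hβ]

private lemma cf_right_mid (hp : r ≤ p) : cfE c r p r = c (p - r) := by
  unfold cfE; rw [if_neg (by omega), if_neg (by omega), if_pos rfl]

private lemma cf_right_high (hp : r ≤ p) (hβ : r < β) : cfE c r p β = 0 := by
  unfold cfE; rw [if_neg (by omega), if_neg (by omega), if_neg (by omega)]

private lemma gf_ll (hα : p < r) (hβ : β < r) :
    gfE a r p β = (if p = β then (1 : ℂ) else 0)
      - ∑ l ∈ range (min p β + 1), a (p - l) * conj (a (β - l)) := by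
  unfold gfE; rw [if_pos hα, if_pos hβ]

private lemma gf_lm (hα : p < r) : gfE a r p r = 0 := by
  unfold gfE; rw [if_pos hα, if_neg (by omega), if_pos rfl]

private lemma gf_lh (hα : p < r) (n : ℕ) : gfE a r p (r + 1 + n) = a (p + n + 1) := by
  unfold gfE
  rw [if_pos hα, if_neg (by omega), if_neg (by omega),
    show p + (r + 1 + n - r) = p + n + 1 from by omega]

private lemma gf_ml : gfE a r r β = if β = r then 1 else 0 := by
  unfold gfE; rw [if_neg (by omega), if_pos rfl]

private lemma gf_hl (m : ℕ) (hβ : β < r) :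
    gfE a r (r + 1 + m) β = conj (a (β + m + 1)) := by
  unfold gfE
  rw [if_neg (by omega), if_neg (by omega), if_pos hβ,
    show β + (r + 1 + m - r) = β + m + 1 from by omega]

private lemma gf_hm (m : ℕ) : gfE a r (r + 1 + m) r = 0 := by
  unfold gfE; rw [if_neg (by omega), if_neg (by omega), if_neg (by omega), if_pos rfl]

private lemma gf_hh (m n : ℕ) :
    gfE a r (r + 1 + m) (r + 1 + n) = (if m = n then (1 : ℂ) else 0)
      - ∑ l ∈ range (min m n + 1), conj (a (m - l)) * a (n - l) := by
  unfold gfE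
  rw [if_neg (by omega), if_neg (by omega), if_neg (by omega), if_neg (by omega),
    if_congr (show r + 1 + m = r + 1 + n ↔ m = n from by omega) rfl rfl,
    show r + 1 + m - r - 1 = m from by omega, show r + 1 + n - r - 1 = n from by omega]

end Branch
private lemma Dfac_apply (c : ℕ → ℂ) (r : ℕ) (h : 2 * r + 1 = r + (r + 1))
    (p k : Fin (2 * r + 1)) :
    (Matrix.fromBlocks (1 : Matrix (Fin r) (Fin r) ℂ) 0 0 (Bmat c (r + 1))).submatrix
      (splitAt h) (splitAt h) p k = dfE c r (p : ℕ) (k : ℕ) := by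
  rw [Matrix.submatrix_apply]
  unfold splitAt dfE
  by_cases hp : (p : ℕ) < r <;> by_cases hk : (k : ℕ) < r
  · rw [dif_pos hp, dif_pos hk, Matrix.fromBlocks_apply₁₁, Matrix.one_apply, if_pos hp]
    simp [Fin.ext_iff]
  · rw [dif_pos hp, dif_neg hk, Matrix.fromBlocks_apply₁₂, if_pos hp,
      if_neg (show ¬ (p : ℕ) = (k : ℕ) from by omega)]
    simp
  · rw [dif_neg hp, dif_pos hk, Matrix.fromBlocks_apply₂₁, if_neg hp,
      if_neg (show ¬ (r ≤ (k : ℕ) ∧ (k : ℕ) ≤ (p : ℕ)) from by omega)]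
    simp
  · rw [dif_neg hp, dif_neg hk, Matrix.fromBlocks_apply₂₂, if_neg hp]
    simp only [Bmat, Matrix.of_apply]
    by_cases h2 : (k : ℕ) ≤ (p : ℕ)
    · rw [if_pos (show (k : ℕ) - r ≤ (p : ℕ) - r from by omega), if_pos (by omega),
        show (p : ℕ) - r - ((k : ℕ) - r) = (p : ℕ) - (k : ℕ) from by omega]
    · rw [if_neg (show ¬ (k : ℕ) - r ≤ (p : ℕ) - r from by omega), if_neg (by omega)]

private lemma Pfac_apply (c : ℕ → ℂ) (r : ℕ) (h1 : 2 * r + 1 = (r + 1) + r)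
    (h2 : 2 * r + 1 = r + (r + 1)) (k q : Fin (2 * r + 1)) :
    (Matrix.fromBlocks (0 : Matrix (Fin (r + 1)) (Fin r) ℂ)
      ((Bmat c (r + 1))ᴴ * Jmat (r + 1)) (1 : Matrix (Fin r) (Fin r) ℂ) 0).submatrix
      (splitAt h1) (splitAt h2) k q = pfE c r (k : ℕ) (q : ℕ) := by
  rw [Matrix.submatrix_apply]
  unfold splitAt pfE
  by_cases hk : (k : ℕ) < r + 1 <;> by_cases hq : (q : ℕ) < r
  · rw [dif_pos hk, dif_pos hq, Matrix.fromBlocks_apply₁₁, if_pos hk,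
      if_neg (show ¬ (r ≤ (q : ℕ) ∧ (k : ℕ) + ((q : ℕ) - r) ≤ r) from by omega)]
    simp
  · rw [dif_pos hk, dif_neg hq, Matrix.fromBlocks_apply₁₂, if_pos hk, BJ_apply]
    by_cases h3 : (k : ℕ) + ((q : ℕ) - r) ≤ r
    · rw [if_pos h3, if_pos (show r ≤ (q : ℕ) ∧ (k : ℕ) + ((q : ℕ) - r) ≤ r from ⟨by omega, h3⟩)]
    · rw [if_neg h3, if_neg (show ¬ (r ≤ (q : ℕ) ∧ (k : ℕ) + ((q : ℕ) - r) ≤ r) from by omega)]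
  · rw [dif_neg hk, dif_pos hq, Matrix.fromBlocks_apply₂₁, if_neg hk, Matrix.one_apply]
    by_cases h3 : (q : ℕ) + r + 1 = (k : ℕ)
    · rw [if_pos (show (⟨(k : ℕ) - (r + 1), by have := k.isLt; omega⟩ : Fin r) = ⟨(q : ℕ), hq⟩
        from by apply Fin.ext; simp; omega), if_pos h3]
    · rw [if_neg (show ¬ (⟨(k : ℕ) - (r + 1), by have := k.isLt; omega⟩ : Fin r) = ⟨(q : ℕ), hq⟩
        from fun hh => h3 (by have := congrArg Fin.val hh; simp at this; omega)), if_neg h3]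
  · rw [dif_neg hk, dif_neg hq, Matrix.fromBlocks_apply₂₂, if_neg hk,
      if_neg (show ¬ ((q : ℕ) + r + 1 = (k : ℕ)) from by have := k.isLt; omega)]
    simp

private lemma Cbig_apply (c : ℕ → ℂ) (hc0 : c 0 = 1) (r : ℕ) (p q : Fin (2 * r + 1)) :
    Cbig c r p q = cfE c r (p : ℕ) (q : ℕ) := by
  unfold Cbig
  rw [Matrix.mul_apply]
  simp only [Dfac_apply c r, Pfac_apply c r]
  rw [Fin.sum_univ_eq_sum_range (fun x => dfE c r (p : ℕ) x * pfE c r x (q : ℕ)) (2 * r + 1)]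
  by_cases hp : (p : ℕ) < r
  · rw [Finset.sum_eq_single (p : ℕ)]
    · unfold dfE pfE cfE
      rw [if_pos hp, if_pos rfl, one_mul, if_pos (show (p : ℕ) < r + 1 from by omega), if_pos hp]
    · intro b _ hb
      unfold dfE
      rw [if_pos hp, if_neg (fun hh => hb hh.symm), zero_mul]
    · intro hmem
      exact absurd (Finset.mem_range.2 p.isLt) hmem
  · by_cases hq : (q : ℕ) < r
    · rw [Finset.sum_eq_single ((q : ℕ) + r + 1)]
      · rw [cf_right_low c (by omega) hq]
        unfold dfE pfE
        rw [if_neg (show ¬ ((q : ℕ) + r + 1 < r + 1) from by omega), if_pos rfl, mul_one,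
          if_neg hp]
        by_cases h3 : (q : ℕ) + r + 1 ≤ (p : ℕ)
        · rw [if_pos (show r ≤ (q : ℕ) + r + 1 ∧ (q : ℕ) + r + 1 ≤ (p : ℕ) from ⟨by omega, h3⟩),
            if_pos h3]
        · rw [if_neg (show ¬ (r ≤ (q : ℕ) + r + 1 ∧ (q : ℕ) + r + 1 ≤ (p : ℕ)) from by omega),
            if_neg h3]
      · intro b hb hbne
        have hb' := Finset.mem_range.1 hb
        unfold dfE pfE
        rw [if_neg hp]
        by_cases hb3 : b < r + 1
        · rw [if_pos hb3, if_neg (show ¬ (r ≤ (q : ℕ) ∧ b + ((q : ℕ) - r) ≤ r) from by omega),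
            mul_zero]
        · rw [if_neg hb3, if_neg (show ¬ ((q : ℕ) + r + 1 = b) from by omega), mul_zero]
      · intro hmem
        exact absurd (Finset.mem_range.2 (by omega)) hmem
    · by_cases hq2 : (q : ℕ) = r
      · rw [Finset.sum_eq_single r]
        · unfold dfE pfE cfE
          rw [if_neg hp, if_pos (show r ≤ (q : ℕ) ∧ r + ((q : ℕ) - r) ≤ r from by omega),
            if_pos (show r < r + 1 from by omega),
            show r - ((q : ℕ) - r) - r = 0 from by omega, hc0, map_one, mul_one,
            if_pos (show r ≤ r ∧ r ≤ (p : ℕ) from by omega), if_neg hp,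
            if_neg (show ¬ (q : ℕ) < r from by omega), if_pos hq2]
        · intro b hb hbne
          have hb' := Finset.mem_range.1 hb
          unfold dfE pfE
          rw [if_neg hp]
          by_cases hbr : b < r
          · rw [if_neg (show ¬ (r ≤ b ∧ b ≤ (p : ℕ)) from by omega), zero_mul]
          · by_cases hb3 : b < r + 1
            · exact absurd (show b = r from by omega) hbne
            · rw [if_neg hb3, if_neg (show ¬ ((q : ℕ) + r + 1 = b) from by omega), mul_zero]
        · intro hmem
          exact absurd (Finset.mem_range.2 (by omega)) hmem
      · rw [cf_right_high c (by omega) (by omega)]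
        refine Finset.sum_eq_zero fun b hb => ?_
        have hb' := Finset.mem_range.1 hb
        unfold dfE pfE
        rw [if_neg hp]
        by_cases hbr : b < r
        · rw [if_neg (show ¬ (r ≤ b ∧ b ≤ (p : ℕ)) from by omega), zero_mul]
        · by_cases hb3 : b < r + 1
          · rw [if_pos hb3, if_neg (show ¬ (r ≤ (q : ℕ) ∧ b + ((q : ℕ) - r) ≤ r) from by
              have := q.isLt; omega), mul_zero]
          · rw [if_neg hb3, if_neg (show ¬ ((q : ℕ) + r + 1 = b) from by omega), mul_zero]

private lemma Gbig_apply (a : ℕ → ℂ) (r : ℕ) (α β : Fin (2 * r + 1)) :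
    Gbig a r α β = gfE a r (α : ℕ) (β : ℕ) := by
  unfold Gbig
  rw [Matrix.submatrix_apply]
  unfold splitAt gfE
  by_cases hα : (α : ℕ) < r <;> by_cases hβ : (β : ℕ) < r
  · rw [dif_pos hα, dif_pos hβ, Matrix.fromBlocks_apply₁₁, Matrix.sub_apply, Matrix.one_apply,
      TT_apply, if_pos hα, if_pos hβ]
    congr 1
    simp [Fin.ext_iff]
  · rw [dif_pos hα, dif_neg hβ, Matrix.fromBlocks_apply₁₂, if_pos hα, if_neg hβ]
    simp only [Matrix.of_apply]
    by_cases hβ2 : (β : ℕ) = r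
    · rw [dif_neg (show ¬ (1 ≤ (β : ℕ) - r) from by omega), if_pos hβ2]
    · rw [dif_pos (show 1 ≤ (β : ℕ) - r from by omega), if_neg hβ2]
      simp only [Qmat, Matrix.of_apply]
      rw [show (α : ℕ) + ((β : ℕ) - r - 1) + 1 = (α : ℕ) + ((β : ℕ) - r) from by omega]
  · rw [dif_neg hα, dif_pos hβ, Matrix.fromBlocks_apply₂₁, if_neg hα]
    simp only [Matrix.of_apply]
    by_cases hα2 : (α : ℕ) = r
    · rw [dif_neg (show ¬ (1 ≤ (α : ℕ) - r) from by omega), if_pos hα2,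
        if_neg (show ¬ (β : ℕ) = r from by omega)]
    · rw [dif_pos (show 1 ≤ (α : ℕ) - r from by omega), if_neg hα2, if_pos hβ]
      simp only [Qmat, Matrix.of_apply]
      rw [show (β : ℕ) + ((α : ℕ) - r - 1) + 1 = (β : ℕ) + ((α : ℕ) - r) from by omega]
  · rw [dif_neg hα, dif_neg hβ, Matrix.fromBlocks_apply₂₂, if_neg hα]
    unfold dblock splitAt
    rw [Matrix.submatrix_apply]
    by_cases hα2 : (α : ℕ) = r <;> by_cases hβ2 : (β : ℕ) = r
    · rw [dif_pos (show ((⟨(α : ℕ) - r, by have := α.isLt; omega⟩ : Fin (r + 1)) : ℕ) < 1 from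
        by simp; omega), dif_pos (show ((⟨(β : ℕ) - r, by have := β.isLt; omega⟩ :
          Fin (r + 1)) : ℕ) < 1 from by simp; omega), Matrix.fromBlocks_apply₁₁,
        if_pos hα2, if_pos hβ2, Matrix.one_apply, if_pos (Subsingleton.elim _ _)]
    · rw [dif_pos (show ((⟨(α : ℕ) - r, by have := α.isLt; omega⟩ : Fin (r + 1)) : ℕ) < 1 from
        by simp; omega), dif_neg (show ¬ ((⟨(β : ℕ) - r, by have := β.isLt; omega⟩ :
          Fin (r + 1)) : ℕ) < 1 from by simp; omega), Matrix.fromBlocks_apply₁₂,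
        if_pos hα2, if_neg hβ2]
      simp
    · rw [dif_neg (show ¬ ((⟨(α : ℕ) - r, by have := α.isLt; omega⟩ : Fin (r + 1)) : ℕ) < 1 from
        by simp; omega), dif_pos (show ((⟨(β : ℕ) - r, by have := β.isLt; omega⟩ :
          Fin (r + 1)) : ℕ) < 1 from by simp; omega), Matrix.fromBlocks_apply₂₁,
        if_neg hα2, if_neg hβ, if_pos hβ2]
      simp
    · rw [dif_neg (show ¬ ((⟨(α : ℕ) - r, by have := α.isLt; omega⟩ : Fin (r + 1)) : ℕ) < 1 from
        by simp; omega), dif_neg (show ¬ ((⟨(β : ℕ) - r, by have := β.isLt; omega⟩ :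
          Fin (r + 1)) : ℕ) < 1 from by simp; omega), Matrix.fromBlocks_apply₂₂,
        if_neg hα2, if_neg hβ, if_neg hβ2, Matrix.sub_apply, Matrix.one_apply, TtT_apply]
    -- remaining: match indices
      simp only []
      by_cases hab : (α : ℕ) = (β : ℕ)
      · rw [if_pos (show (⟨((⟨(α : ℕ) - r, _⟩ : Fin (r+1)) : ℕ) - 1, _⟩ : Fin r) = ⟨((⟨(β : ℕ) - r, _⟩ : Fin (r+1)) : ℕ) - 1, _⟩ from by apply Fin.ext; simp; omega), if_pos hab]
      · rw [if_neg (show ¬ (⟨((⟨(α : ℕ) - r, _⟩ : Fin (r+1)) : ℕ) - 1, _⟩ : Fin r) = ⟨((⟨(β : ℕ) - r, _⟩ : Fin (r+1)) : ℕ) - 1, _⟩ from fun hh => hab (by have := congrArg Fin.val hh; simp at this; omega)), if_neg hab]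
private lemma masterSum (a c : ℕ → ℂ) (hc0 : c 0 = 1)
    (hc : ∀ k : ℕ, c (k + 1) = ∑ j ∈ range (k + 1), c j * a (k - j))
    (r p q : ℕ) (hp2 : p ≤ 2 * r) (hq2 : q ≤ 2 * r) :
    ∑ β ∈ range (2 * r + 1),
        (∑ α ∈ range (2 * r + 1), cfE c r p α * gfE a r α β) * conj (cfE c r q β)
      = if q ≤ p then c (p - q) else conj (c (q - p)) := by
  have hc0' : conj (c 0) = 1 := by rw [hc0, map_one]
  have hc' : ∀ k : ℕ, conj (c (k + 1)) = ∑ j ∈ range (k + 1), conj (c j) * conj (a (k - j)) := by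
    intro k
    rw [hc k, map_sum]
    exact Finset.sum_congr rfl fun j _ => map_mul _ _ _
  by_cases hpr : p < r <;> by_cases hqr : q < r
  · -- case A : p < r, q < r
    have hIL : ∀ β, (∑ α ∈ range (2 * r + 1), cfE c r p α * gfE a r α β)
        = conj (c (r - p)) * gfE a r r β
          + ∑ m ∈ range (r - p), conj (c (r - p - 1 - m)) * gfE a r (r + 1 + m) β := by
      intro β
      rw [sum_split]
      have h1 : ∑ x ∈ range r, cfE c r p x * gfE a r x β = 0 :=
        Finset.sum_eq_zero fun x hx => by rw [cf_left_low c hpr (mem_range.1 hx), zero_mul]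
      rw [h1, zero_add, cf_left_mid c hpr]
      congr 1
      have h2 : ∀ x ∈ range r, cfE c r p (r + 1 + x) * gfE a r (r + 1 + x) β
          = if p + x + 1 ≤ r then conj (c (r - p - 1 - x)) * gfE a r (r + 1 + x) β else 0 :=
        fun x hx => by rw [cf_left_high c hpr x, ite_mul, zero_mul]
      rw [Finset.sum_congr rfl h2, sum_ite_range (show r - p ≤ r from by omega)
        (fun x => conj (c (r - p - 1 - x)) * gfE a r (r + 1 + x) β)
        (fun x => p + x + 1 ≤ r) (fun x hx => by omega)]
    rw [sum_split]
    have h1 : ∑ x ∈ range r, (∑ α ∈ range (2 * r + 1), cfE c r p α * gfE a r α x)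
        * conj (cfE c r q x) = 0 :=
      Finset.sum_eq_zero fun x hx => by
        rw [cf_left_low c hqr (mem_range.1 hx), map_zero, mul_zero]
    rw [h1, zero_add, hIL r, cf_left_mid c hqr, starRingEnd_self_apply, gf_ml,
      if_pos rfl, mul_one]
    have h4 : ∑ m ∈ range (r - p), conj (c (r - p - 1 - m)) * gfE a r (r + 1 + m) r = 0 :=
      Finset.sum_eq_zero fun m _ => by rw [gf_hm, mul_zero]
    rw [h4, add_zero]
    have h5 : ∀ x ∈ range r,
        (∑ α ∈ range (2 * r + 1), cfE c r p α * gfE a r α (r + 1 + x))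
            * conj (cfE c r q (r + 1 + x))
        = if q + x + 1 ≤ r then
            (∑ α ∈ range (2 * r + 1), cfE c r p α * gfE a r α (r + 1 + x))
              * c (r - q - 1 - x) else 0 := fun x hx => by
      rw [cf_left_high c hqr x, apply_ite (starRingEnd ℂ), map_zero, starRingEnd_self_apply,
        mul_ite, mul_zero]
    rw [Finset.sum_congr rfl h5, sum_ite_range (show r - q ≤ r from by omega)
      (fun x => (∑ α ∈ range (2 * r + 1), cfE c r p α * gfE a r α (r + 1 + x))
        * c (r - q - 1 - x)) (fun x => q + x + 1 ≤ r) (fun x hx => by omega)]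
    have h6 : ∀ n ∈ range (r - q),
        (∑ α ∈ range (2 * r + 1), cfE c r p α * gfE a r α (r + 1 + n)) * c (r - q - 1 - n)
        = ∑ m ∈ range (r - p), conj (c (r - p - 1 - m)) * c (r - q - 1 - n) *
            ((if m = n then (1 : ℂ) else 0)
              - ∑ l ∈ range (min m n + 1), conj (a (m - l)) * a (n - l)) := by
      intro n hn
      rw [hIL (r + 1 + n), gf_ml, if_neg (show ¬ (r + 1 + n = r) from by omega), mul_zero,
        zero_add, Finset.sum_mul]
      refine Finset.sum_congr rfl fun m hm => ?_
      rw [gf_hh a m n]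
      ring
    rw [Finset.sum_congr rfl h6, Finset.sum_comm]
    have hKey := KeyAD (fun n => conj (a n)) (fun n => conj (c n)) hc0' hc' (r - p) (r - q)
    simp only [starRingEnd_self_apply] at hKey
    rw [hKey]
    rcases Nat.lt_trichotomy q p with h7 | h7 | h7
    · rw [if_neg (show ¬ (r - q ≤ r - p) from by omega), if_pos (show q ≤ p from by omega),
        show r - q - (r - p) = p - q from by omega]
    · rw [if_pos (show r - q ≤ r - p from by omega), if_pos (show q ≤ p from by omega),
        show r - p - (r - q) = 0 from by omega, show p - q = 0 from by omega, hc0, map_one]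
    · rw [if_pos (show r - q ≤ r - p from by omega), if_neg (show ¬ q ≤ p from by omega),
        show r - p - (r - q) = q - p from by omega]
  · -- case B : p < r, r ≤ q
    have hrq : r ≤ q := by omega
    have hIL : ∀ β, (∑ α ∈ range (2 * r + 1), cfE c r p α * gfE a r α β)
        = conj (c (r - p)) * gfE a r r β
          + ∑ m ∈ range (r - p), conj (c (r - p - 1 - m)) * gfE a r (r + 1 + m) β := by
      intro β
      rw [sum_split]
      have h1 : ∑ x ∈ range r, cfE c r p x * gfE a r x β = 0 :=
        Finset.sum_eq_zero fun x hx => by rw [cf_left_low c hpr (mem_range.1 hx), zero_mul]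
      rw [h1, zero_add, cf_left_mid c hpr]
      congr 1
      have h2 : ∀ x ∈ range r, cfE c r p (r + 1 + x) * gfE a r (r + 1 + x) β
          = if p + x + 1 ≤ r then conj (c (r - p - 1 - x)) * gfE a r (r + 1 + x) β else 0 :=
        fun x hx => by rw [cf_left_high c hpr x, ite_mul, zero_mul]
      rw [Finset.sum_congr rfl h2, sum_ite_range (show r - p ≤ r from by omega)
        (fun x => conj (c (r - p - 1 - x)) * gfE a r (r + 1 + x) β)
        (fun x => p + x + 1 ≤ r) (fun x hx => by omega)]
    rw [sum_split]
    have h3 : ∑ x ∈ range r, (∑ α ∈ range (2 * r + 1), cfE c r p α * gfE a r α (r + 1 + x))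
        * conj (cfE c r q (r + 1 + x)) = 0 :=
      Finset.sum_eq_zero fun x _ => by rw [cf_right_high c hrq (by omega), map_zero, mul_zero]
    rw [h3, add_zero, hIL r, cf_right_mid c hrq, gf_ml, if_pos rfl, mul_one]
    have h4 : ∑ m ∈ range (r - p), conj (c (r - p - 1 - m)) * gfE a r (r + 1 + m) r = 0 :=
      Finset.sum_eq_zero fun m _ => by rw [gf_hm, mul_zero]
    rw [h4, add_zero]
    have h5 : ∀ x ∈ range r,
        (∑ α ∈ range (2 * r + 1), cfE c r p α * gfE a r α x) * conj (cfE c r q x)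
        = if x + r + 1 ≤ q then
            (∑ α ∈ range (2 * r + 1), cfE c r p α * gfE a r α x) * conj (c (q - (x + r + 1)))
          else 0 := fun x hx => by
      rw [cf_right_low c hrq (mem_range.1 hx), apply_ite (starRingEnd ℂ), map_zero,
        mul_ite, mul_zero]
    rw [Finset.sum_congr rfl h5, sum_ite_range (show q - r ≤ r from by omega)
      (fun x => (∑ α ∈ range (2 * r + 1), cfE c r p α * gfE a r α x)
        * conj (c (q - (x + r + 1)))) (fun x => x + r + 1 ≤ q) (fun x hx => by omega)]
    have h6 : ∀ k ∈ range (q - r),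
        (∑ α ∈ range (2 * r + 1), cfE c r p α * gfE a r α k) * conj (c (q - (k + r + 1)))
        = ∑ m ∈ range (r - p), conj (c (r - p - 1 - m)) * conj (a (m + k + 1))
            * conj (c (q - r - 1 - k)) := by
      intro k hk
      have hkr : k < r := by have := mem_range.1 hk; omega
      rw [hIL k, gf_ml, if_neg (show ¬ k = r from by omega), mul_zero, zero_add,
        Finset.sum_mul]
      refine Finset.sum_congr rfl fun m hm => ?_
      rw [gf_hl a m hkr, show q - (k + r + 1) = q - r - 1 - k from by omega,
        show k + m + 1 = m + k + 1 from by omega]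
    rw [Finset.sum_congr rfl h6, Finset.sum_comm, add_comm]
    have hKey : conj (c (r - p)) * conj (c (q - r))
        + ∑ j ∈ range (r - p), ∑ k ∈ range (q - r),
            conj (c (r - p - 1 - j)) * conj (a (j + k + 1)) * conj (c (q - r - 1 - k))
        = conj (c (r - p + (q - r))) :=
      KeyB (fun n => conj (a n)) (fun n => conj (c n)) hc0' hc' (r - p) (q - r)
    rw [hKey, if_neg (show ¬ q ≤ p from by omega),
      show r - p + (q - r) = q - p from by omega]
  · -- case C : r ≤ p, q < r
    have hrp : r ≤ p := by omega
    have hIR : ∀ β, (∑ α ∈ range (2 * r + 1), cfE c r p α * gfE a r α β)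
        = (∑ j ∈ range (p - r), c (p - r - 1 - j) * gfE a r j β)
          + c (p - r) * gfE a r r β := by
      intro β
      rw [sum_split]
      have h3 : ∑ x ∈ range r, cfE c r p (r + 1 + x) * gfE a r (r + 1 + x) β = 0 :=
        Finset.sum_eq_zero fun x _ => by rw [cf_right_high c hrp (by omega), zero_mul]
      rw [h3, add_zero, cf_right_mid c hrp]
      congr 1
      have h1 : ∀ x ∈ range r, cfE c r p x * gfE a r x β
          = if x + r + 1 ≤ p then c (p - (x + r + 1)) * gfE a r x β else 0 := fun x hx => by
        rw [cf_right_low c hrp (mem_range.1 hx), ite_mul, zero_mul]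
      rw [Finset.sum_congr rfl h1, sum_ite_range (show p - r ≤ r from by omega)
        (fun x => c (p - (x + r + 1)) * gfE a r x β) (fun x => x + r + 1 ≤ p)
        (fun x hx => by omega)]
      exact Finset.sum_congr rfl fun x hx => by
        rw [show p - (x + r + 1) = p - r - 1 - x from by omega]
    rw [sum_split]
    have h1 : ∑ x ∈ range r, (∑ α ∈ range (2 * r + 1), cfE c r p α * gfE a r α x)
        * conj (cfE c r q x) = 0 :=
      Finset.sum_eq_zero fun x hx => by
        rw [cf_left_low c hqr (mem_range.1 hx), map_zero, mul_zero]
    rw [h1, zero_add, hIR r, cf_left_mid c hqr, starRingEnd_self_apply]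
    have h4 : ∑ j ∈ range (p - r), c (p - r - 1 - j) * gfE a r j r = 0 :=
      Finset.sum_eq_zero fun j hj => by
        rw [gf_lm a (show j < r from by have := mem_range.1 hj; omega), mul_zero]
    rw [h4, zero_add, gf_ml, if_pos rfl, mul_one]
    have h5 : ∀ x ∈ range r,
        (∑ α ∈ range (2 * r + 1), cfE c r p α * gfE a r α (r + 1 + x))
            * conj (cfE c r q (r + 1 + x))
        = if q + x + 1 ≤ r then
            (∑ α ∈ range (2 * r + 1), cfE c r p α * gfE a r α (r + 1 + x))
              * c (r - q - 1 - x) else 0 := fun x hx => by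
      rw [cf_left_high c hqr x, apply_ite (starRingEnd ℂ), map_zero, starRingEnd_self_apply,
        mul_ite, mul_zero]
    rw [Finset.sum_congr rfl h5, sum_ite_range (show r - q ≤ r from by omega)
      (fun x => (∑ α ∈ range (2 * r + 1), cfE c r p α * gfE a r α (r + 1 + x))
        * c (r - q - 1 - x)) (fun x => q + x + 1 ≤ r) (fun x hx => by omega)]
    have h6 : ∀ n ∈ range (r - q),
        (∑ α ∈ range (2 * r + 1), cfE c r p α * gfE a r α (r + 1 + n)) * c (r - q - 1 - n)
        = ∑ j ∈ range (p - r), c (p - r - 1 - j) * a (j + n + 1) * c (r - q - 1 - n) := by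
      intro n hn
      rw [hIR (r + 1 + n), gf_ml, if_neg (show ¬ (r + 1 + n = r) from by omega), mul_zero,
        add_zero, Finset.sum_mul]
      refine Finset.sum_congr rfl fun j hj => ?_
      have hjr : j < r := by have := mem_range.1 hj; omega
      rw [gf_lh a hjr n]
    rw [Finset.sum_congr rfl h6, Finset.sum_comm,
      KeyB a c hc0 hc (p - r) (r - q), if_pos (show q ≤ p from by omega),
      show p - r + (r - q) = p - q from by omega]
  · -- case D : r ≤ p, r ≤ q
    have hrp : r ≤ p := by omega
    have hrq : r ≤ q := by omega
    have hIR : ∀ β, (∑ α ∈ range (2 * r + 1), cfE c r p α * gfE a r α β)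
        = (∑ j ∈ range (p - r), c (p - r - 1 - j) * gfE a r j β)
          + c (p - r) * gfE a r r β := by
      intro β
      rw [sum_split]
      have h3 : ∑ x ∈ range r, cfE c r p (r + 1 + x) * gfE a r (r + 1 + x) β = 0 :=
        Finset.sum_eq_zero fun x _ => by rw [cf_right_high c hrp (by omega), zero_mul]
      rw [h3, add_zero, cf_right_mid c hrp]
      congr 1
      have h1 : ∀ x ∈ range r, cfE c r p x * gfE a r x β
          = if x + r + 1 ≤ p then c (p - (x + r + 1)) * gfE a r x β else 0 := fun x hx => by
        rw [cf_right_low c hrp (mem_range.1 hx), ite_mul, zero_mul]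
      rw [Finset.sum_congr rfl h1, sum_ite_range (show p - r ≤ r from by omega)
        (fun x => c (p - (x + r + 1)) * gfE a r x β) (fun x => x + r + 1 ≤ p)
        (fun x hx => by omega)]
      exact Finset.sum_congr rfl fun x hx => by
        rw [show p - (x + r + 1) = p - r - 1 - x from by omega]
    rw [sum_split]
    have h3 : ∑ x ∈ range r, (∑ α ∈ range (2 * r + 1), cfE c r p α * gfE a r α (r + 1 + x))
        * conj (cfE c r q (r + 1 + x)) = 0 :=
      Finset.sum_eq_zero fun x _ => by rw [cf_right_high c hrq (by omega), map_zero, mul_zero]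
    rw [h3, add_zero, hIR r, cf_right_mid c hrq]
    have h4 : ∑ j ∈ range (p - r), c (p - r - 1 - j) * gfE a r j r = 0 :=
      Finset.sum_eq_zero fun j hj => by
        rw [gf_lm a (show j < r from by have := mem_range.1 hj; omega), mul_zero]
    rw [h4, zero_add, gf_ml, if_pos rfl, mul_one]
    have h5 : ∀ x ∈ range r,
        (∑ α ∈ range (2 * r + 1), cfE c r p α * gfE a r α x) * conj (cfE c r q x)
        = if x + r + 1 ≤ q then
            (∑ α ∈ range (2 * r + 1), cfE c r p α * gfE a r α x) * conj (c (q - (x + r + 1)))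
          else 0 := fun x hx => by
      rw [cf_right_low c hrq (mem_range.1 hx), apply_ite (starRingEnd ℂ), map_zero,
        mul_ite, mul_zero]
    rw [Finset.sum_congr rfl h5, sum_ite_range (show q - r ≤ r from by omega)
      (fun x => (∑ α ∈ range (2 * r + 1), cfE c r p α * gfE a r α x)
        * conj (c (q - (x + r + 1)))) (fun x => x + r + 1 ≤ q) (fun x hx => by omega)]
    have h6 : ∀ k ∈ range (q - r),
        (∑ α ∈ range (2 * r + 1), cfE c r p α * gfE a r α k) * conj (c (q - (k + r + 1)))
        = ∑ j ∈ range (p - r), c (p - r - 1 - j) * conj (c (q - r - 1 - k)) *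
            ((if j = k then (1 : ℂ) else 0)
              - ∑ l ∈ range (min j k + 1), a (j - l) * conj (a (k - l))) := by
      intro k hk
      have hkr : k < r := by have := mem_range.1 hk; omega
      rw [hIR k, gf_ml, if_neg (show ¬ k = r from by omega), mul_zero, add_zero,
        Finset.sum_mul]
      refine Finset.sum_congr rfl fun j hj => ?_
      have hjr : j < r := by have := mem_range.1 hj; omega
      rw [gf_ll a hjr hkr, show q - (k + r + 1) = q - r - 1 - k from by omega]
      ring
    rw [Finset.sum_congr rfl h6, Finset.sum_comm, add_comm,
      KeyAD a c hc0 hc (p - r) (q - r)]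
    by_cases h7 : q ≤ p
    · rw [if_pos h7, if_pos (show q - r ≤ p - r from by omega),
        show p - r - (q - r) = p - q from by omega]
    · rw [if_neg h7, if_neg (show ¬ (q - r ≤ p - r) from by omega),
        show q - r - (p - r) = q - p from by omega]
end Statement4Aux

/-- `M_{2r} = C_r G_r C_r*`. -/
theorem Mmat_two_mul_eq_Cbig_Gbig_mul
    (a c : ℕ → ℂ) (hc0 : c 0 = 1)
    (hc : ∀ k : ℕ, c (k + 1) = ∑ j ∈ Finset.range (k + 1), c j * a (k - j))
    (r : ℕ) (hr : 1 ≤ r) :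
    Mmat c (2 * r + 1) = Cbig c r * Gbig a r * (Cbig c r)ᴴ := by
  ext i j
  simp only [Matrix.mul_apply, Matrix.conjTranspose_apply]
  simp only [Cbig_apply c hc0 r, Gbig_apply a r, ← starRingEnd_apply]
  have h1 : ∀ β : Fin (2 * r + 1),
      (∑ α : Fin (2 * r + 1), cfE c r (i : ℕ) (α : ℕ) * gfE a r (α : ℕ) (β : ℕ))
      = ∑ α ∈ Finset.range (2 * r + 1), cfE c r (i : ℕ) α * gfE a r α (β : ℕ) := fun β =>
    Fin.sum_univ_eq_sum_range (fun x => cfE c r (i : ℕ) x * gfE a r x (β : ℕ)) (2 * r + 1)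
  simp only [h1]
  rw [Fin.sum_univ_eq_sum_range (fun x =>
    (∑ α ∈ Finset.range (2 * r + 1), cfE c r (i : ℕ) α * gfE a r α x)
      * conj (cfE c r (j : ℕ) x)) (2 * r + 1)]
  rw [masterSum a c hc0 hc r (i : ℕ) (j : ℕ) (by have := i.isLt; omega)
    (by have := j.isLt; omega)]
  rfl
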